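/- Let α > 0 and define g : [0,1] → ℝ by g(p) = −2α√(p(1−p)). Then: (i) for every p ∈ (0,1), g'(p) = −α(1−2p)/√(p(1−p)) and the liability vector S_g(p,·) = (g'(p), 0) + (g(p) − p·g'(p))·𝟙 equals −α(√((1−p)/p), √(p/(1−p))), so in particular its coordinates q = S_g(p,·) satisfy q₁·q₂ = α²; and (ii) conversely, if q ∈ ℝ² satisfies q₁ < 0, q₂ < 0, and q₁·q₂ = α², then p := q₂/(q₁+q₂) lies in (0,1) and q = S_g(p,·). -/

import Mathlib

noncomputable section

/-- For `g(p) = −2α√(p(1−p))` with `α > 0`: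
(i) on `(0,1)`, `g'(p) = −α(1−2p)/√(p(1−p))`, the liability vector
`S_g(p,·) = (g'(p),0) + (g(p) − p·g'(p))·𝟙` equals
`−α(√((1−p)/p), √(p/(1−p)))`, and its coordinates satisfy `q₁q₂ = α²`;
(ii) conversely, any `q ≺ 0` with `q₁q₂ = α²` equals `S_g(p,·)` for
`p = q₂/(q₁+q₂) ∈ (0,1)`. -/
theorem statement11 (α : ℝ) (hα : 0 < α) (g : ℝ → ℝ)
    (hg : ∀ p, g p = -2 * α * Real.sqrt (p * (1 - p)))
    (Sg : ℝ → Fin 2 → ℝ)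
    (hSg : ∀ p, Sg p = ![deriv g p, 0] + (g p - p * deriv g p) • (fun _ => 1 : Fin 2 → ℝ)) :
    (∀ p ∈ Set.Ioo (0:ℝ) 1,
      deriv g p = -α * (1 - 2*p) / Real.sqrt (p * (1 - p)) ∧
      Sg p = ![-α * Real.sqrt ((1 - p)/p), -α * Real.sqrt (p/(1 - p))] ∧
      Sg p 0 * Sg p 1 = α ^ 2) ∧
    (∀ q : Fin 2 → ℝ, q 0 < 0 → q 1 < 0 → q 0 * q 1 = α ^ 2 →
      q 1 / (q 0 + q 1) ∈ Set.Ioo (0:ℝ) 1 ∧ q = Sg (q 1 / (q 0 + q 1))) := by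
  have hgfun : g = fun x => -2 * α * Real.sqrt (x * (1 - x)) := funext hg
  have key : ∀ p ∈ Set.Ioo (0:ℝ) 1,
      deriv g p = -α * (1 - 2*p) / Real.sqrt (p * (1 - p)) ∧
      Sg p = ![-α * Real.sqrt ((1 - p)/p), -α * Real.sqrt (p/(1 - p))] ∧
      Sg p 0 * Sg p 1 = α ^ 2 := by
    rintro p ⟨hp0, hp1⟩
    have hpos : 0 < p * (1 - p) := mul_pos hp0 (by linarith)
    set a := Real.sqrt p with ha_def
    set b := Real.sqrt (1 - p) with hb_def
    have ha : 0 < a := Real.sqrt_pos.mpr hp0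
    have hb : 0 < b := Real.sqrt_pos.mpr (by linarith)
    have ha2 : a ^ 2 = p := Real.sq_sqrt hp0.le
    have hb2 : b ^ 2 = 1 - p := Real.sq_sqrt (by linarith)
    have hab1 : a ^ 2 + b ^ 2 = 1 := by rw [ha2, hb2]; ring
    have hs : Real.sqrt (p * (1 - p)) = a * b := Real.sqrt_mul hp0.le _
    have hF : HasDerivAt (fun x : ℝ => x * (1 - x)) (1 - 2 * p) p := by
      have h := (hasDerivAt_id p).mul ((hasDerivAt_const p (1:ℝ)).sub (hasDerivAt_id p))
      simp only [Pi.mul_def, Pi.sub_def, id_eq, one_mul, zero_sub] at h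
      exact h.congr_deriv (by ring)
    have hsq : HasDerivAt (fun x : ℝ => Real.sqrt (x * (1 - x)))
        ((1 - 2 * p) / (2 * Real.sqrt (p * (1 - p)))) p := hF.sqrt hpos.ne'
    have hG : HasDerivAt g (-2 * α * ((1 - 2 * p) / (2 * Real.sqrt (p * (1 - p))))) p := by
      rw [hgfun]; exact hsq.const_mul _
    have hab : a * b ≠ 0 := by positivity
    have hd : deriv g p = -α * (1 - 2*p) / Real.sqrt (p * (1 - p)) := by
      rw [hG.deriv, hs]; field_simp
    have hgp : g p = -2 * α * (a * b) := by rw [hg, hs]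
    have hdp : deriv g p = -α * (1 - 2*p) / (a * b) := by rw [hd, hs]
    refine ⟨hd, ?_, ?_⟩
    · have h1 : Real.sqrt ((1 - p)/p) = b / a := by
        rw [show (1 - p)/p = (b/a)^2 by rw [div_pow, ha2, hb2]]
        exact Real.sqrt_sq (by positivity)
      have h2 : Real.sqrt (p/(1 - p)) = a / b := by
        rw [show p/(1 - p) = (a/b)^2 by rw [div_pow, ha2, hb2]]
        exact Real.sqrt_sq (by positivity)
      rw [hSg]
      funext i
      fin_cases i
      · simp only [Fin.zero_eta, Pi.add_apply, Pi.smul_apply, Matrix.cons_val_zero, smul_eq_mul, mul_one]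
        rw [hgp, hdp, h1, ← ha2]
        field_simp
        linear_combination (1-2*a^2) * hab1
      · simp only [Fin.mk_one, Pi.add_apply, Pi.smul_apply, Matrix.cons_val_one, Matrix.head_cons, Matrix.cons_val_zero,
          smul_eq_mul, mul_one]
        rw [hgp, hdp, h2, ← ha2]
        field_simp
        linear_combination (-2*α*a) * hab1
    · rw [hSg]
      simp only [Pi.add_apply, Pi.smul_apply, Matrix.cons_val_zero, Matrix.cons_val_one,
        Matrix.head_cons, smul_eq_mul, mul_one]
      rw [hgp, hdp, ← ha2]
      field_simp
      linear_combination (α*(4*a^3*b^2 + a - 4*a^3 + 4*a^5)) * hab1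
  refine ⟨key, ?_⟩
  intro q h0 h1 hprod
  have hsum : q 0 + q 1 < 0 := by linarith
  set p := q 1 / (q 0 + q 1) with hp_def
  have hp0 : 0 < p := div_pos_of_neg_of_neg h1 hsum
  have hne : q 0 + q 1 ≠ 0 := hsum.ne
  have h1mp : 1 - p = q 0 / (q 0 + q 1) := by rw [hp_def]; field_simp; ring
  have hp1 : p < 1 := by
    have h' : 0 < q 0 / (q 0 + q 1) := div_pos_of_neg_of_neg h0 hsum
    rw [← h1mp] at h'; linarith
  have hmem : p ∈ Set.Ioo (0:ℝ) 1 := ⟨hp0, hp1⟩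
  obtain ⟨-, hSgp, -⟩ := key p hmem
  refine ⟨hmem, ?_⟩
  have hr1 : (1 - p)/p = q 0 / q 1 := by
    rw [h1mp, hp_def]; field_simp
  have hr2 : p/(1 - p) = q 1 / q 0 := by
    rw [h1mp, hp_def]; field_simp
  have hq0sq : (-(q 0)/α)^2 = q 0 / q 1 := by
    rw [div_pow, neg_sq, ← hprod, pow_two, mul_div_mul_left _ _ h0.ne]
  have hq1sq : (-(q 1)/α)^2 = q 1 / q 0 := by
    rw [div_pow, neg_sq, ← hprod, pow_two, mul_comm (q 0) (q 1), mul_div_mul_left _ _ h1.ne]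
  have hq0 : Real.sqrt ((1 - p)/p) = -(q 0)/α := by
    rw [hr1, ← hq0sq]
    exact Real.sqrt_sq (div_nonneg (by linarith) hα.le)
  have hq1 : Real.sqrt (p/(1 - p)) = -(q 1)/α := by
    rw [hr2, ← hq1sq]
    exact Real.sqrt_sq (div_nonneg (by linarith) hα.le)
  rw [hSgp, hq0, hq1]
  funext i
  fin_cases i <;>
    simp only [Fin.zero_eta, Fin.mk_one, Matrix.cons_val_zero, Matrix.cons_val_one, Matrix.head_cons, Fin.isValue] <;>
    field_simp
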